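/- Let G be a real symmetric positive semidefinite d×d matrix, x ∈ ℝ^d a vector, and α ≥ 0, σ ≥ 0 real numbers. Let M = G + xxᵀ have spectral decomposition M = Σ_{j=1}^d μⱼ vⱼvⱼᵀ with orthonormal eigenvectors vⱼ and eigenvalues μⱼ ≥ 0, and let M′ = Σ_{j=1}^d max(μⱼ − σ, 0) · vⱼvⱼᵀ be the shrunk matrix. Then M′ + (α + σ)·I_d ⪰ G + α·I_d. -/

import Mathlib

open Matrix

private lemma psd_add {d : ℕ} {A B : Matrix (Fin d) (Fin d) ℝ}
    (hA : A.PosSemidef) (hB : B.PosSemidef) : (A + B).PosSemidef := by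
  refine ⟨hA.1.add hB.1, fun y => ?_⟩
  have := add_nonneg (hA.2 y) (hB.2 y)
  simpa [Finsupp.sum, mul_add, add_mul, Finset.sum_add_distrib] using this

private lemma psd_smul {d : ℕ} {A : Matrix (Fin d) (Fin d) ℝ} (hA : A.PosSemidef)
    {c : ℝ} (hc : 0 ≤ c) : (c • A).PosSemidef := by
  have herm : (c • A).IsHermitian := by
    rw [Matrix.IsHermitian, Matrix.conjTranspose_smul, hA.1.eq, star_trivial]
  refine ⟨herm, fun y => ?_⟩
  have := mul_nonneg hc (hA.2 y)
  simpa [Finsupp.sum, Finset.mul_sum, mul_assoc, mul_left_comm] using this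

private lemma psd_vmv {d : ℕ} (a : Fin d → ℝ) : (Matrix.vecMulVec a a).PosSemidef := by
  have h := Matrix.posSemidef_conjTranspose_mul_self (Matrix.replicateRow Unit a)
  have hrow : (Matrix.replicateRow Unit a)ᴴ = Matrix.replicateCol Unit a := by
    ext i j; simp [Matrix.conjTranspose_apply]
  rw [hrow] at h
  rwa [Matrix.vecMulVec_eq Unit]

private lemma psd_sum {d : ℕ} (f : Fin d → Matrix (Fin d) (Fin d) ℝ)
    (hf : ∀ j, (f j).PosSemidef) : (∑ j, f j).PosSemidef := by
  classical
  refine Finset.sum_induction f Matrix.PosSemidef (fun A B hA hB => psd_add hA hB) ?_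
    (fun j _ => hf j)
  exact Matrix.PosSemidef.zero

/-- **Positive definite monotonicity of the RFD update step.**  Let `G` be PSD, `x` a new
row, and let `M = G + xxᵀ` have spectral decomposition `∑ⱼ μⱼ vⱼvⱼᵀ`.  If `M′` is the
shrunk matrix `∑ⱼ max (μⱼ − σ) 0 • vⱼvⱼᵀ`, then `M′ + (α + σ)·I ⪰ G + α·I`. -/
theorem rfd_monotone {d : ℕ} (G : Matrix (Fin d) (Fin d) ℝ) (hG : G.PosSemidef)
    (x : Fin d → ℝ) (α σ : ℝ) (hα : 0 ≤ α) (hσ : 0 ≤ σ)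
    (v : Fin d → Fin d → ℝ) (μ : Fin d → ℝ)
    (horth : ∀ i j, v i ⬝ᵥ v j = if i = j then (1 : ℝ) else 0)
    (hμ : ∀ j, 0 ≤ μ j)
    (hdecomp : G + Matrix.vecMulVec x x = ∑ j, μ j • Matrix.vecMulVec (v j) (v j)) :
    ((∑ j, max (μ j - σ) 0 • Matrix.vecMulVec (v j) (v j))
        + (α + σ) • (1 : Matrix (Fin d) (Fin d) ℝ)
      - (G + α • (1 : Matrix (Fin d) (Fin d) ℝ))).PosSemidef := by
  classical
  -- the orthonormal rows form a resolution of identity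
  set V : Matrix (Fin d) (Fin d) ℝ := Matrix.of v with hV
  have hVVt : V * Vᵀ = 1 := by
    ext i j
    simpa [hV, Matrix.mul_apply, Matrix.one_apply, dotProduct] using horth i j
  have hVtV : Vᵀ * V = 1 := mul_eq_one_comm.mp hVVt
  have hI : ∑ j, Matrix.vecMulVec (v j) (v j) = (1 : Matrix (Fin d) (Fin d) ℝ) := by
    rw [← hVtV]
    ext i k
    simp [Matrix.mul_apply, Matrix.vecMulVec, Matrix.sum_apply, hV, mul_comm]
  have hGeq : G = (∑ j, μ j • Matrix.vecMulVec (v j) (v j)) - Matrix.vecMulVec x x := by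
    rw [← hdecomp]; abel
  have key : ((∑ j, max (μ j - σ) 0 • Matrix.vecMulVec (v j) (v j))
        + (α + σ) • (1 : Matrix (Fin d) (Fin d) ℝ)
      - (G + α • (1 : Matrix (Fin d) (Fin d) ℝ)))
      = (∑ j, (max (μ j - σ) 0 + σ - μ j) • Matrix.vecMulVec (v j) (v j))
        + Matrix.vecMulVec x x := by
    rw [hGeq]
    have hsum : (∑ j, (max (μ j - σ) 0 + σ - μ j) • Matrix.vecMulVec (v j) (v j))
        = (∑ j, max (μ j - σ) 0 • Matrix.vecMulVec (v j) (v j))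
          + σ • (1 : Matrix (Fin d) (Fin d) ℝ)
          - (∑ j, μ j • Matrix.vecMulVec (v j) (v j)) := by
      rw [← hI, Finset.smul_sum, ← Finset.sum_add_distrib, ← Finset.sum_sub_distrib]
      refine Finset.sum_congr rfl fun j _ => ?_
      rw [sub_smul, add_smul]
    rw [hsum, add_smul]
    abel
  rw [key]
  refine psd_add (psd_sum _ fun j => psd_smul (psd_vmv (v j)) ?_) (psd_vmv x)
  have := le_max_left (μ j - σ) 0
  linarith
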